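/- Let W be the Coxeter group on generators s₁,...,s₅ with Coxeter matrix M given by m_ii = 1 for all i, m_12 = m_21 = 8, m_2j = m_j2 = 101 for j ∈ {3,4,5}, and m_ij = ∞ for all remaining pairs i ≠ j. Then the four-element set X = { s₂, s₁s₂s₁s₂s₁s₂s₁·(s₃s₂)^50, s₁s₂s₁·(s₄s₂)^50, s₁·(s₅s₂)^50 } generates W; in particular the rank of W is at most 4, which is strictly less than the cardinality 5 of the standard Coxeter generating set, even though every finite off-diagonal entry of M is at least 2^{5-2} = 8. -/

import Mathlib

/-- The Coxeter matrix on five generators `s₁, …, s₅` with `m₁₂ = 8`, `m₂ⱼ = 101` for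
`j ∈ {3,4,5}` and all remaining off-diagonal entries equal to `∞` (encoded by `0` in
Mathlib's convention). -/
def M5 : CoxeterMatrix (Fin 5) where
  M := !![1,  8,  0,  0,  0;
          8,  1,  101,101,101;
          0,  101,1,  0,  0;
          0,  101,0,  1,  0;
          0,  101,0,  0,  1]
  off_diagonal := by intro i i' h; fin_cases i <;> fin_cases i' <;> simp_all

section Aux

variable {G : Type*} [Group G]

/-- In any group, if `a`, `c` are involutions and `(a*c)^101 = 1`, then
`(a*c)^50 * a * (c*a)^50 = c`. -/
lemma weidmann_conj_aux (a c : G) (ha : a * a = 1) (hc : c * c = 1)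
    (h : (a * c) ^ 101 = 1) : (a * c) ^ 50 * a * (c * a) ^ 50 = c := by
  have hsc : SemiconjBy a (c * a) (a * c) := by
    unfold SemiconjBy; group
  have h1 : a * (c * a) ^ 50 = (a * c) ^ 50 * a := hsc.pow_right 50
  have h100 : (a * c) ^ 100 * (a * c) = 1 := by rw [← pow_succ]; exact h
  calc (a * c) ^ 50 * a * (c * a) ^ 50
      = (a * c) ^ 50 * (a * (c * a) ^ 50) := by rw [mul_assoc]
    _ = (a * c) ^ 50 * ((a * c) ^ 50 * a) := by rw [h1]
    _ = (a * c) ^ 100 * a := by rw [← mul_assoc, ← pow_add]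
    _ = c := by
        have hinv : (a * c) ^ 100 = c * a := by
          have : (a * c) * (c * a) = 1 := by
            calc (a * c) * (c * a) = a * (c * c) * a := by group
              _ = 1 := by rw [hc, mul_one, ha]
          have := h100
          calc (a * c) ^ 100 = (a * c) ^ 100 * ((a * c) * (c * a)) := by
                rw [‹(a * c) * (c * a) = 1›, mul_one]
            _ = ((a * c) ^ 100 * (a * c)) * (c * a) := by group
            _ = c * a := by rw [h100, one_mul]
        rw [hinv, mul_assoc, ha, mul_one]

end Aux

/-- The four-element set
`X = { s₂, s₁s₂s₁s₂s₁s₂s₁·(s₃s₂)⁵⁰, s₁s₂s₁·(s₄s₂)⁵⁰, s₁·(s₅s₂)⁵⁰ }` generates the Coxeter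
group `W(M5)`; in particular the rank of `W(M5)` is at most `4 < 5 = |S|`, even though every
finite off-diagonal entry of `M5` is at least `2^(5-2) = 8`. -/
theorem weidmann_example_rank_le_four :
    Subgroup.closure
      ({M5.simple 1,
        M5.simple 0 * M5.simple 1 * M5.simple 0 * M5.simple 1 * M5.simple 0 * M5.simple 1 *
          M5.simple 0 * (M5.simple 2 * M5.simple 1) ^ 50,
        M5.simple 0 * M5.simple 1 * M5.simple 0 * (M5.simple 3 * M5.simple 1) ^ 50,
        M5.simple 0 * (M5.simple 4 * M5.simple 1) ^ 50} : Set M5.Group) = ⊤ ∧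
    (∃ X : Finset M5.Group, X.card ≤ 4 ∧ 4 < Fintype.card (Fin 5) ∧
      Subgroup.closure (X : Set M5.Group) = ⊤) ∧
    (∀ i j : Fin 5, i ≠ j → M5 i j = 0 ∨ 2 ^ (5 - 2) ≤ M5 i j) := by
  set s : Fin 5 → M5.Group := M5.simple with hs
  have hss : ∀ i, s i * s i = 1 := fun i => by
    have := M5.toCoxeterSystem.simple_mul_simple_self i
    rwa [CoxeterMatrix.toCoxeterSystem_simple] at this
  -- the dihedral relations
  have hrel : ∀ i j : Fin 5, (s i * s j) ^ (M5 i j) = 1 := fun i j => by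
    have := M5.toCoxeterSystem.simple_mul_simple_pow i j
    rwa [CoxeterMatrix.toCoxeterSystem_simple] at this
  have h8 : (s 0 * s 1) ^ 8 = 1 := by have := hrel 0 1; rwa [show M5 0 1 = 8 from rfl] at this
  have h12 : (s 1 * s 2) ^ 101 = 1 := by
    have := hrel 1 2; rwa [show M5 1 2 = 101 from rfl] at this
  have h13 : (s 1 * s 3) ^ 101 = 1 := by
    have := hrel 1 3; rwa [show M5 1 3 = 101 from rfl] at this
  have h14 : (s 1 * s 4) ^ 101 = 1 := by
    have := hrel 1 4; rwa [show M5 1 4 = 101 from rfl] at this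
  set a : M5.Group := s 1
  set b : M5.Group := s 0
  set c : M5.Group := s 2
  set d : M5.Group := s 3
  set e : M5.Group := s 4
  set g3 : M5.Group := b * a * b * a * b * a * b * (c * a) ^ 50 with hg3
  set g4 : M5.Group := b * a * b * (d * a) ^ 50 with hg4
  set g5 : M5.Group := b * (e * a) ^ 50 with hg5
  set X : Set M5.Group := {a, g3, g4, g5} with hX
  set H : Subgroup M5.Group := Subgroup.closure X with hH
  have haH : a ∈ H := Subgroup.subset_closure (by simp [hX])
  have hg3H : g3 ∈ H := Subgroup.subset_closure (by simp [hX])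
  have hg4H : g4 ∈ H := Subgroup.subset_closure (by simp [hX])
  have hg5H : g5 ∈ H := Subgroup.subset_closure (by simp [hX])
  have ha2 : a * a = 1 := hss 1
  have hb2 : b * b = 1 := hss 0
  have hc2 : c * c = 1 := hss 2
  have hd2 : d * d = 1 := hss 3
  have he2 : e * e = 1 := hss 4
  -- `(a*c)^50 * a * (c*a)^50 = c` and friends
  have keyc : (a * c) ^ 50 * a * (c * a) ^ 50 = c := weidmann_conj_aux a c ha2 hc2 h12
  have keyd : (a * d) ^ 50 * a * (d * a) ^ 50 = d := weidmann_conj_aux a d ha2 hd2 h13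
  have keye : (a * e) ^ 50 * a * (e * a) ^ 50 = e := weidmann_conj_aux a e ha2 he2 h14
  -- the prefix `p₃ = bababab` conjugates `a` to `a`, using `(b*a)^8 = 1`
  have hainv : a⁻¹ = a := by rw [inv_eq_iff_mul_eq_one]; exact ha2
  have hbinv : b⁻¹ = b := by rw [inv_eq_iff_mul_eq_one]; exact hb2
  have hba8 : (b * a) ^ 8 = 1 := h8
  have hp3a : (b * a * b * a * b * a * b) * a * (b * a * b * a * b * a * b) = a := by
    have h7 : (b * a * b * a * b * a * b) * a = (b * a) ^ 4 := by
      rw [show (4 : ℕ) = 1 + 1 + 1 + 1 from rfl]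
      simp only [pow_add, pow_one]; group
    have h3 : (b * a * b * a * b * a * b) = (b * a) ^ 3 * b := by
      rw [show (3 : ℕ) = 1 + 1 + 1 from rfl]
      simp only [pow_add, pow_one]; group
    have h7inv : (b * a) ^ 7 = (b * a)⁻¹ := by
      have h78 : (b * a) ^ 7 * (b * a) = 1 := by rw [← pow_succ]; exact hba8
      exact eq_inv_of_mul_eq_one_left h78
    calc (b * a * b * a * b * a * b) * a * (b * a * b * a * b * a * b)
        = (b * a) ^ 4 * ((b * a) ^ 3 * b) := by rw [h7, h3]
      _ = (b * a) ^ 7 * b := by rw [← mul_assoc, ← pow_add]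
      _ = (b * a)⁻¹ * b := by rw [h7inv]
      _ = a := by rw [mul_inv_rev, mul_assoc, inv_mul_cancel, mul_one, hainv]
  -- Step 1 : c ∈ H
  have hcH : c ∈ H := by
    have hid : g3⁻¹ * a * g3 = c := by
      rw [hg3]
      have : (b * a * b * a * b * a * b * (c * a) ^ 50)⁻¹ * a *
          (b * a * b * a * b * a * b * (c * a) ^ 50)
          = ((c * a) ^ 50)⁻¹ *
            ((b * a * b * a * b * a * b) * a * (b * a * b * a * b * a * b)) *
            (c * a) ^ 50 := by
          simp only [mul_inv_rev, hbinv, hainv]; group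
      rw [this, hp3a]
      have hci : ((c * a) ^ 50)⁻¹ = (a * c) ^ 50 := by
        rw [← inv_pow, mul_inv_rev, hainv, inv_eq_iff_mul_eq_one.mpr hc2]
      rw [hci]
      exact keyc
    have : g3⁻¹ * a * g3 ∈ H := mul_mem (mul_mem (inv_mem hg3H) haH) hg3H
    rwa [hid] at this
  -- Step 2 : p₃ = bababab ∈ H
  have hr3H : (c * a) ^ 50 ∈ H := pow_mem (mul_mem hcH haH) 50
  have hp3H : b * a * b * a * b * a * b ∈ H := by
    have : g3 * ((c * a) ^ 50)⁻¹ ∈ H := mul_mem hg3H (inv_mem hr3H)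
    rwa [hg3, mul_inv_cancel_right] at this
  -- Step 3 : d ∈ H
  have hdH : d ∈ H := by
    have hid : g4⁻¹ * (b * a * b * a * b * a * b) * g4 = d := by
      rw [hg4]
      have hmid : (b * a * b) * (b * a * b * a * b * a * b) * (b * a * b) = a := by
        calc (b * a * b) * (b * a * b * a * b * a * b) * (b * a * b)
            = b * a * (b * b) * a * b * a * b * a * (b * b) * a * b := by group
          _ = b * a * a * b * a * b * a * a * b := by rw [hb2]; group
          _ = b * (a * a) * b * a * b * (a * a) * b := by group
          _ = b * b * a * (b * b) := by rw [ha2]; group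
          _ = a := by rw [hb2]; group
      have : (b * a * b * (d * a) ^ 50)⁻¹ * (b * a * b * a * b * a * b) *
          (b * a * b * (d * a) ^ 50)
          = ((d * a) ^ 50)⁻¹ *
            ((b * a * b) * (b * a * b * a * b * a * b) * (b * a * b)) * (d * a) ^ 50 := by
        simp only [mul_inv_rev, hbinv, hainv]; group
      rw [this, hmid]
      have hdi : ((d * a) ^ 50)⁻¹ = (a * d) ^ 50 := by
        rw [← inv_pow, mul_inv_rev, hainv, inv_eq_iff_mul_eq_one.mpr hd2]
      rw [hdi]
      exact keyd
    have : g4⁻¹ * (b * a * b * a * b * a * b) * g4 ∈ H :=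
      mul_mem (mul_mem (inv_mem hg4H) hp3H) hg4H
    rwa [hid] at this
  -- Step 4 : p₄ = bab ∈ H
  have hr4H : (d * a) ^ 50 ∈ H := pow_mem (mul_mem hdH haH) 50
  have hp4H : b * a * b ∈ H := by
    have : g4 * ((d * a) ^ 50)⁻¹ ∈ H := mul_mem hg4H (inv_mem hr4H)
    rwa [hg4, mul_inv_cancel_right] at this
  -- Step 5 : e ∈ H
  have heH : e ∈ H := by
    have hid : g5⁻¹ * (b * a * b) * g5 = e := by
      rw [hg5]
      have hmid : b * (b * a * b) * b = a := by
        calc b * (b * a * b) * b = (b * b) * a * (b * b) := by group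
          _ = a := by rw [hb2]; group
      have : (b * (e * a) ^ 50)⁻¹ * (b * a * b) * (b * (e * a) ^ 50)
          = ((e * a) ^ 50)⁻¹ * (b * (b * a * b) * b) * (e * a) ^ 50 := by
        simp only [mul_inv_rev, hbinv]; group
      rw [this, hmid]
      have hei : ((e * a) ^ 50)⁻¹ = (a * e) ^ 50 := by
        rw [← inv_pow, mul_inv_rev, hainv, inv_eq_iff_mul_eq_one.mpr he2]
      rw [hei]
      exact keye
    have : g5⁻¹ * (b * a * b) * g5 ∈ H := mul_mem (mul_mem (inv_mem hg5H) hp4H) hg5H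
    rwa [hid] at this
  -- Step 6 : b ∈ H
  have hr5H : (e * a) ^ 50 ∈ H := pow_mem (mul_mem heH haH) 50
  have hbH : b ∈ H := by
    have : g5 * ((e * a) ^ 50)⁻¹ ∈ H := mul_mem hg5H (inv_mem hr5H)
    rwa [hg5, mul_inv_cancel_right] at this
  -- all simple reflections lie in H
  have hall : ∀ i : Fin 5, s i ∈ H := by
    intro i
    fin_cases i
    · exact hbH
    · exact haH
    · exact hcH
    · exact hdH
    · exact heH
  have hclosure : H = ⊤ := by
    rw [eq_top_iff, ← M5.toCoxeterSystem.subgroup_closure_range_simple]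
    rw [Subgroup.closure_le]
    rintro x ⟨i, rfl⟩
    rw [CoxeterMatrix.toCoxeterSystem_simple]
    exact hall i
  refine ⟨hclosure, ?_, ?_⟩
  · classical
    refine ⟨{a, g3, g4, g5}, ?_, by norm_num, ?_⟩
    · apply le_trans (Finset.card_insert_le _ _)
      have h1 := Finset.card_insert_le g3 ({g4, g5} : Finset M5.Group)
      have h2 := Finset.card_insert_le g4 ({g5} : Finset M5.Group)
      simp only [Finset.card_singleton] at *
      omega
    · have hcoe : (↑({a, g3, g4, g5} : Finset M5.Group) : Set M5.Group) = X := by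
        simp [hX]
      rw [hcoe, ← hH]
      exact hclosure
  · intro i j h; fin_cases i <;> fin_cases j <;> simp_all [M5]
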